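/- In the lattice of fuzzy left ideals of a Γ-semiring (with join ⊕ and meet ∩), if every fuzzy left ideal is a fuzzy left k-ideal, then the lattice is modular; concretely: if μ₂∩μ₁ = μ₂∩μ₃, μ₂⊕μ₁ = μ₂⊕μ₃, and μ₁ ⊆ μ₃, then μ₁ = μ₃. -/

import Mathlib

open Classical

/-- A Γ-semiring: additive commutative monoids `S` and `G` with a triadditive,
associative product `tmul : S → G → S → S` for which zero is absorbing. -/
class GammaSemiring (S : Type*) (G : Type*) [AddCommMonoid S] [AddCommMonoid G] where
  tmul : S → G → S → S
  add_tmul : ∀ (a b : S) (γ : G) (c : S), tmul (a + b) γ c = tmul a γ c + tmul b γ c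
  tmul_add : ∀ (a : S) (γ : G) (b c : S), tmul a γ (b + c) = tmul a γ b + tmul a γ c
  tmul_gadd : ∀ (a : S) (γ δ : G) (b : S), tmul a (γ + δ) b = tmul a γ b + tmul a δ b
  tmul_assoc : ∀ (a : S) (γ : G) (b : S) (δ : G) (c : S),
      tmul a γ (tmul b δ c) = tmul (tmul a γ b) δ c
  zero_tmul : ∀ (γ : G) (x : S), tmul 0 γ x = 0
  tmul_zero : ∀ (x : S) (γ : G), tmul x γ 0 = 0
  tmul_gzero : ∀ (x y : S), tmul x 0 y = 0

/-- μ is a fuzzy left ideal: `[0,1]`-valued, `μ 0 = 1`, superadditive under `min`,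
and `μ (xγy) ≥ μ y`. -/
def IsFuzzyLeftIdeal (S G : Type*) [AddCommMonoid S] [AddCommMonoid G]
    [GammaSemiring S G] (μ : S → ℝ) : Prop :=
  (∀ x, μ x ∈ Set.Icc (0 : ℝ) 1) ∧ μ 0 = 1 ∧
  (∀ x y, min (μ x) (μ y) ≤ μ (x + y)) ∧
  (∀ (x : S) (γ : G) (y : S), μ y ≤ μ (GammaSemiring.tmul x γ y))

/-- μ is a fuzzy right ideal. -/
def IsFuzzyRightIdeal (S G : Type*) [AddCommMonoid S] [AddCommMonoid G]
    [GammaSemiring S G] (μ : S → ℝ) : Prop :=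
  (∀ x, μ x ∈ Set.Icc (0 : ℝ) 1) ∧ μ 0 = 1 ∧
  (∀ x y, min (μ x) (μ y) ≤ μ (x + y)) ∧
  (∀ (x : S) (γ : G) (y : S), μ x ≤ μ (GammaSemiring.tmul x γ y))

/-- μ is a fuzzy (two-sided) ideal. -/
def IsFuzzyIdeal (S G : Type*) [AddCommMonoid S] [AddCommMonoid G]
    [GammaSemiring S G] (μ : S → ℝ) : Prop :=
  (∀ x, μ x ∈ Set.Icc (0 : ℝ) 1) ∧ μ 0 = 1 ∧
  (∀ x y, min (μ x) (μ y) ≤ μ (x + y)) ∧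
  (∀ (x : S) (γ : G) (y : S), max (μ x) (μ y) ≤ μ (GammaSemiring.tmul x γ y))

/-- The sum `μ ⊕ ν` of fuzzy subsets: `(μ ⊕ ν)(x) = sup { min (μ u) (ν v) : x = u + v }`. -/
noncomputable def fSum {S : Type*} [AddCommMonoid S] (μ ν : S → ℝ) : S → ℝ := fun x =>
  sSup {r : ℝ | ∃ u v : S, x = u + v ∧ r = min (μ u) (ν v)}

/-- The product `μ Γ ν`: `(μ Γ ν)(x) = sup { min (μ u) (ν v) : x = uγv }`
(`sSup ∅ = 0` in `ℝ`, matching the convention that it is `0` with no representation). -/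
noncomputable def fProd (S G : Type*) [AddCommMonoid S] [AddCommMonoid G]
    [GammaSemiring S G] (μ ν : S → ℝ) : S → ℝ := fun x =>
  sSup {r : ℝ | ∃ (u : S) (γ : G) (v : S),
    x = GammaSemiring.tmul u γ v ∧ r = min (μ u) (ν v)}

/-- The composition `μ ∘ ν`:
`(μ ∘ ν)(x) = sup { min_{1 ≤ i ≤ n} min (μ uᵢ) (ν vᵢ) : x = Σᵢ uᵢγᵢvᵢ, n ≥ 1 }`. -/
noncomputable def fComp (S G : Type*) [AddCommMonoid S] [AddCommMonoid G]
    [GammaSemiring S G] (μ ν : S → ℝ) : S → ℝ := fun x =>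
  sSup {r : ℝ | ∃ (n : ℕ) (u v : Fin (n + 1) → S) (γ : Fin (n + 1) → G),
    x = ∑ i, GammaSemiring.tmul (u i) (γ i) (v i) ∧
    r = Finset.univ.inf' Finset.univ_nonempty (fun i => min (μ (u i)) (ν (v i)))}

theorem fuzzyLeftIdeal_modular {S G : Type*} [AddCommMonoid S] [AddCommMonoid G]
    [GammaSemiring S G] (μ₁ μ₂ μ₃ : S → ℝ)
    (h₁ : IsFuzzyLeftIdeal S G μ₁) (h₂ : IsFuzzyLeftIdeal S G μ₂)
    (h₃ : IsFuzzyLeftIdeal S G μ₃)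
    (hk : ∀ x y : S, min (μ₃ (x + y)) (μ₃ y) ≤ μ₃ x)
    (hmeet : (fun x => min (μ₂ x) (μ₁ x)) = fun x => min (μ₂ x) (μ₃ x))
    (hjoin : fSum μ₂ μ₁ = fSum μ₂ μ₃)
    (hle : ∀ x : S, μ₁ x ≤ μ₃ x) :
    μ₁ = μ₃ := by
  funext x
  refine le_antisymm (hle x) ?_
  -- the set of decomposition values for fSum μ₂ μ₁ at x
  set T : Set ℝ := {r : ℝ | ∃ u v : S, x = u + v ∧ r = min (μ₂ u) (μ₁ v)} with hT
  have hTne : T.Nonempty := ⟨min (μ₂ 0) (μ₁ x), 0, x, by rw [zero_add], rfl⟩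
  have hTbdd : BddAbove T := by
    refine ⟨1, ?_⟩
    rintro r ⟨u, v, -, rfl⟩
    exact le_trans (min_le_left _ _) (h₂.1 u).2
  -- every element of T, cut by μ₃ x, is ≤ μ₁ x
  have key : ∀ r ∈ T, min (μ₃ x) r ≤ μ₁ x := by
    rintro r ⟨u, v, hx, rfl⟩
    have h5 : min (μ₃ x) (μ₁ v) ≤ μ₃ u := by
      calc min (μ₃ x) (μ₁ v) ≤ min (μ₃ (u + v)) (μ₃ v) := by
            rw [hx]; exact min_le_min le_rfl (hle v)
        _ ≤ μ₃ u := hk u v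
    have h6 : min (μ₂ u) (μ₃ u) ≤ μ₁ u := by
      have := congrFun hmeet u
      rw [← this]
      exact min_le_right _ _
    have h7 : min (μ₃ x) (min (μ₂ u) (μ₁ v)) ≤ μ₁ u := by
      refine le_trans ?_ h6
      refine le_min (le_trans (min_le_right _ _) (min_le_left _ _)) ?_
      refine le_trans ?_ h5
      exact le_min (min_le_left _ _) (le_trans (min_le_right _ _) (min_le_right _ _))
    have h8 : min (μ₃ x) (min (μ₂ u) (μ₁ v)) ≤ μ₁ v :=
      le_trans (min_le_right _ _) (min_le_right _ _)
    calc min (μ₃ x) (min (μ₂ u) (μ₁ v)) ≤ min (μ₁ u) (μ₁ v) := le_min h7 h8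
      _ ≤ μ₁ (u + v) := h₁.2.2.1 u v
      _ = μ₁ x := by rw [← hx]
  -- μ₃ x ≤ sSup T
  have hsup : μ₃ x ≤ sSup T := by
    have h1 : μ₃ x ≤ fSum μ₂ μ₃ x := by
      have hmem : min (μ₂ 0) (μ₃ x) ∈
          {r : ℝ | ∃ u v : S, x = u + v ∧ r = min (μ₂ u) (μ₃ v)} :=
        ⟨0, x, by rw [zero_add], rfl⟩
      have hbdd : BddAbove {r : ℝ | ∃ u v : S, x = u + v ∧ r = min (μ₂ u) (μ₃ v)} := by
        refine ⟨1, ?_⟩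
        rintro r ⟨u, v, -, rfl⟩
        exact le_trans (min_le_left _ _) (h₂.1 u).2
      have := le_csSup hbdd hmem
      have heq : min (μ₂ 0) (μ₃ x) = μ₃ x := by
        rw [h₂.2.1]; exact min_eq_right (h₃.1 x).2
      rw [heq] at this
      exact this
    rw [← hjoin] at h1
    exact h1
  -- ε-argument
  refine le_of_forall_pos_le_add ?_
  intro ε hε
  have hlt : μ₃ x - ε < sSup T := by linarith
  obtain ⟨r, hrT, hr⟩ := exists_lt_of_lt_csSup hTne hlt
  have : μ₃ x - ε ≤ min (μ₃ x) r := le_min (by linarith) (le_of_lt hr)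
  linarith [key r hrT]
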